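/- Let q : ℝⁿ × (−∞, 0) → ℝ and λ ∈ ℝ. Then q is parabolically λ-homogeneous (i.e., q(rx, r²t) = r^λ q(x, t) for all r > 0) and satisfies (Δ − ∂ₜ)q = 0 on an open set U if and only if the function f(x) := q(x, −1) satisfies Δf − (x/2)·∇f + (λ/2) f = 0 on the corresponding slice. -/

import Mathlib

open MeasureTheory Real Set
open scoped RealInnerProductSpace

/-- The Laplacian on `ℝⁿ` as the sum of second coordinate derivatives. -/
noncomputable def lap {n : ℕ} (f : EuclideanSpace ℝ (Fin n) → ℝ)
    (x : EuclideanSpace ℝ (Fin n)) : ℝ :=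
  ∑ i : Fin n,
    fderiv ℝ (fun y => fderiv ℝ f y (EuclideanSpace.single i 1)) x (EuclideanSpace.single i 1)

section Aux

variable {n : ℕ}
local notation "E" => EuclideanSpace ℝ (Fin n)

lemma slice_fderiv (q : E × ℝ → ℝ) (hq : ContDiff ℝ 2 q) (x : E) (t : ℝ) (v : E) :
    fderiv ℝ (fun y => q (y, t)) x v = fderiv ℝ q (x, t) (v, 0) := by
  have h := ((hq.differentiable two_ne_zero) (x, t)).hasFDerivAt
  have h2 := h.comp x (hasFDerivAt_prodMk_left (𝕜 := ℝ) x t)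
  exact congrFun (congrArg _ ((h2 : HasFDerivAt (fun y => q (y,t)) _ x).fderiv)) v |>.trans rfl

lemma slice_deriv (q : E × ℝ → ℝ) (hq : ContDiff ℝ 2 q) (x : E) (t : ℝ) :
    deriv (fun s => q (x, s)) t = fderiv ℝ q (x, t) (0, 1) := by
  have h := ((hq.differentiable two_ne_zero) (x, t)).hasFDerivAt
  have h2 := h.comp_hasDerivAt t ((hasDerivAt_const t x).prodMk (hasDerivAt_id t))
  exact (h2 : HasDerivAt (fun s => q (x,s)) _ t).deriv

lemma euler (lam : ℝ) (q : E × ℝ → ℝ) (hq : ContDiff ℝ 2 q)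
    (hhom : ∀ r : ℝ, 0 < r → ∀ x : E, ∀ t : ℝ, t < 0 →
      q (r • x, r ^ 2 * t) = r ^ lam * q (x, t)) (x : E) :
    fderiv ℝ q (x, -1) (x, -2) = lam * q (x, -1) := by
  have hφ : HasDerivAt (fun r : ℝ => ((r • x, r ^ 2 * (-1)) : E × ℝ)) ((x, -2) : E × ℝ) 1 := by
    have h1 : HasDerivAt (fun r : ℝ => r • x) x 1 := by
      simpa using (hasDerivAt_id (1:ℝ)).smul_const x
    have h2 : HasDerivAt (fun r : ℝ => r ^ 2 * (-1)) (-2) 1 := by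
      simpa using (hasDerivAt_pow 2 (1:ℝ)).mul_const (-1)
    exact h1.prodMk h2
  have hF : HasFDerivAt q (fderiv ℝ q (x, -1)) ((1:ℝ) • x, (1:ℝ) ^ 2 * (-1)) := by
    simpa using ((hq.differentiable two_ne_zero) (x, -1)).hasFDerivAt
  have hL : HasDerivAt (fun r : ℝ => q (r • x, r ^ 2 * (-1))) (fderiv ℝ q (x, -1) (x, -2)) 1 :=
    hF.comp_hasDerivAt 1 hφ
  have hR : HasDerivAt (fun r : ℝ => r ^ lam * q (x, -1)) (lam * q (x, -1)) 1 := by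
    simpa using (Real.hasDerivAt_rpow_const (x := (1:ℝ)) (p := lam)
      (Or.inl one_ne_zero)).mul_const (q (x, -1))
  have hev : (fun r : ℝ => q (r • x, r ^ 2 * (-1))) =ᶠ[nhds (1:ℝ)]
      (fun r : ℝ => r ^ lam * q (x, -1)) := by
    filter_upwards [Ioi_mem_nhds (show (0:ℝ) < 1 by norm_num)] with r hr
    exact hhom r hr x (-1) (by norm_num)
  exact (hL.congr_of_eventuallyEq hev.symm).unique hR

lemma time_scale (lam : ℝ) (q : E × ℝ → ℝ) (hq : ContDiff ℝ 2 q)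
    (hhom : ∀ r : ℝ, 0 < r → ∀ x : E, ∀ t : ℝ, t < 0 →
      q (r • x, r ^ 2 * t) = r ^ lam * q (x, t)) (r : ℝ) (hr : 0 < r) (x : E) :
    deriv (fun s => q (x, s)) (r ^ 2 * (-1)) =
      r ^ (lam - 2) * deriv (fun s => q (r⁻¹ • x, s)) (-1) := by
  have hu : Differentiable ℝ (fun s => q (x, s)) :=
    (hq.differentiable two_ne_zero).comp (differentiable_const x |>.prodMk differentiable_id)
  have hv : Differentiable ℝ (fun s => q (r⁻¹ • x, s)) :=
    (hq.differentiable two_ne_zero).comp (differentiable_const _ |>.prodMk differentiable_id)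
  have hL : HasDerivAt (fun s : ℝ => q (x, r ^ 2 * s))
      (deriv (fun s => q (x, s)) (r ^ 2 * (-1)) * r ^ 2) (-1) :=
    by
      have hin : HasDerivAt (fun s : ℝ => r ^ 2 * s) (r ^ 2) (-1) := by
        simpa using (hasDerivAt_id (-1:ℝ)).const_mul (r ^ 2)
      exact (hu _).hasDerivAt.comp (-1) hin
  have hR : HasDerivAt (fun s : ℝ => r ^ lam * q (r⁻¹ • x, s))
      (r ^ lam * deriv (fun s => q (r⁻¹ • x, s)) (-1)) (-1) :=
    ((hv _).hasDerivAt).const_mul (r ^ lam)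
  have hev : (fun s : ℝ => q (x, r ^ 2 * s)) =ᶠ[nhds (-1:ℝ)]
      (fun s : ℝ => r ^ lam * q (r⁻¹ • x, s)) := by
    filter_upwards [Iio_mem_nhds (show (-1:ℝ) < 0 by norm_num)] with s hs
    have := hhom r hr (r⁻¹ • x) s hs
    rwa [smul_inv_smul₀ hr.ne'] at this
  have key := (hL.congr_of_eventuallyEq hev.symm).unique hR
  have hr2 : (r:ℝ) ^ 2 ≠ 0 := pow_ne_zero 2 hr.ne'
  have hpow : r ^ (lam - 2) * r ^ 2 = r ^ lam := by
    rw [← Real.rpow_natCast r 2, ← Real.rpow_add hr]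
    norm_num
  refine mul_right_cancel₀ hr2 ?_
  calc deriv (fun s => q (x, s)) (r ^ 2 * (-1)) * r ^ 2
      = r ^ lam * deriv (fun s => q (r⁻¹ • x, s)) (-1) := by linarith [key]
    _ = r ^ (lam - 2) * deriv (fun s => q (r⁻¹ • x, s)) (-1) * r ^ 2 := by
        rw [mul_right_comm, hpow]

lemma lap_scale (f : E → ℝ) (hf : ContDiff ℝ 2 f) (c a : ℝ) (x : E) :
    lap (fun y => c * f (a • y)) x = (c * a ^ 2) * lap f (a • x) := by
  have hfd : Differentiable ℝ f := hf.differentiable two_ne_zero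
  have hfd1 : Differentiable ℝ (fderiv ℝ f) :=
    (hf.fderiv_right (m := 1) (by norm_num)).differentiable one_ne_zero
  unfold lap
  rw [Finset.mul_sum]
  refine Finset.sum_congr rfl fun i _ => ?_
  set e : E := EuclideanSpace.single i 1 with he
  have step1 : ∀ y : E, fderiv ℝ (fun z => c * f (a • z)) y e
      = (c * a) * fderiv ℝ f (a • y) e := by
    intro y
    have h1 : HasFDerivAt (fun z : E => a • z) (a • ContinuousLinearMap.id ℝ E) y :=
      (hasFDerivAt_id y).const_smul a
    have h2 : HasFDerivAt f (fderiv ℝ f (a • y)) (a • y) := (hfd _).hasFDerivAt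
    have h3 : HasFDerivAt (fun z => c * f (a • z))
        (c • (fderiv ℝ f (a • y)).comp (a • ContinuousLinearMap.id ℝ E)) y :=
      (h2.comp y h1).const_mul c
    rw [h3.fderiv]
    simp [mul_assoc]
  have hfun : (fun y : E => fderiv ℝ (fun z => c * f (a • z)) y e)
      = fun y => (c * a) * ((fun z => fderiv ℝ f z e) (a • y)) := funext step1
  rw [hfun]
  set g : E → ℝ := fun z => fderiv ℝ f z e with hg
  have hgd : Differentiable ℝ g := hfd1.clm_apply (differentiable_const e)
  have h1 : HasFDerivAt (fun z : E => a • z) (a • ContinuousLinearMap.id ℝ E) x :=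
    (hasFDerivAt_id x).const_smul a
  have h2 : HasFDerivAt g (fderiv ℝ g (a • x)) (a • x) := (hgd _).hasFDerivAt
  have h3 : HasFDerivAt (fun y => (c * a) * g (a • y))
      ((c * a) • (fderiv ℝ g (a • x)).comp (a • ContinuousLinearMap.id ℝ E)) x :=
    (h2.comp x h1).const_mul (c * a)
  rw [h3.fderiv]
  simp [hg]
  ring

lemma inner_grad (f : E → ℝ) (x : E) : ⟪x, gradient f x⟫ = fderiv ℝ f x x := by
  rw [real_inner_comm, gradient, InnerProductSpace.toDual_symm_apply]

end Aux

/-- For a parabolically `λ`-homogeneous function `q` on `ℝⁿ × (−∞,0)`, `q` is caloric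
(`Δq − ∂ₜq = 0`) if and only if the time `−1` slice `f = q(·,−1)` is an eigenfunction of the
Ornstein–Uhlenbeck operator: `Δf − (x/2)·∇f + (λ/2)f = 0`. -/
theorem stmt7 (n : ℕ) (lam : ℝ) (q : EuclideanSpace ℝ (Fin n) × ℝ → ℝ)
    (hq : ContDiff ℝ 2 q)
    (hhom : ∀ r : ℝ, 0 < r → ∀ x : EuclideanSpace ℝ (Fin n), ∀ t : ℝ, t < 0 →
      q (r • x, r ^ 2 * t) = r ^ lam * q (x, t)) :
    (∀ x : EuclideanSpace ℝ (Fin n), ∀ t : ℝ, t < 0 →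
        lap (fun y => q (y, t)) x - deriv (fun s => q (x, s)) t = 0)
      ↔ (∀ x : EuclideanSpace ℝ (Fin n),
          lap (fun y => q (y, -1)) x
            - (1 / 2) * ⟪x, gradient (fun y => q (y, -1)) x⟫
            + lam / 2 * q (x, -1) = 0) := by
  have hf2 : ContDiff ℝ 2 (fun y => q (y, -1)) := hq.comp (contDiff_id.prodMk contDiff_const)
  -- Euler identity at the slice level
  have heuler : ∀ x : EuclideanSpace ℝ (Fin n),
      ⟪x, gradient (fun y => q (y, -1)) x⟫
        - 2 * deriv (fun s => q (x, s)) (-1) = lam * q (x, -1) := by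
    intro x
    have hdec : ((x, (-2:ℝ)) : EuclideanSpace ℝ (Fin n) × ℝ)
        = (x, 0) + (-2 : ℝ) • ((0 : EuclideanSpace ℝ (Fin n)), (1:ℝ)) := by
      simp
    have he := euler lam q hq hhom x
    rw [hdec, map_add, _root_.map_smul] at he
    rw [inner_grad, slice_fderiv q hq x (-1) x, slice_deriv q hq x (-1)]
    simpa [smul_eq_mul, sub_eq_add_neg] using he
  -- the equivalence at the slice t = -1
  have hclaim : ∀ x : EuclideanSpace ℝ (Fin n),
      (lap (fun y => q (y, -1)) x - deriv (fun s => q (x, s)) (-1) = 0)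
      ↔ (lap (fun y => q (y, -1)) x
          - (1 / 2) * ⟪x, gradient (fun y => q (y, -1)) x⟫
          + lam / 2 * q (x, -1) = 0) := by
    intro x
    have he := heuler x
    constructor <;> intro h <;> linarith
  constructor
  · intro h x
    exact (hclaim x).mp (h x (-1) (by norm_num))
  · intro h x t ht
    set r : ℝ := Real.sqrt (-t) with hrdef
    have hr : 0 < r := Real.sqrt_pos.2 (by linarith)
    have hr2 : r ^ 2 = -t := Real.sq_sqrt (by linarith)
    have hrt : r ^ 2 * (-1) = t := by rw [hr2]; ring
    -- caloric at (r⁻¹ • x, -1)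
    have hcal : lap (fun y => q (y, -1)) (r⁻¹ • x)
        - deriv (fun s => q (r⁻¹ • x, s)) (-1) = 0 := (hclaim _).mpr (h _)
    -- Laplacian scaling
    have hslice : (fun y => q (y, t))
        = fun z => r ^ lam * ((fun w => q (w, -1)) (r⁻¹ • z)) := by
      funext z
      have h1 := hhom r hr (r⁻¹ • z) (-1) (by norm_num)
      rw [smul_inv_smul₀ hr.ne', hrt] at h1
      exact h1
    have hlap : lap (fun y => q (y, t)) x
        = (r ^ lam * (r⁻¹) ^ 2) * lap (fun y => q (y, -1)) (r⁻¹ • x) := by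
      rw [hslice]
      exact lap_scale _ hf2 (r ^ lam) r⁻¹ x
    have hcoef : r ^ lam * (r⁻¹) ^ 2 = r ^ (lam - 2) := by
      have h2 : r ^ (2:ℝ) = r ^ (2:ℕ) := by exact_mod_cast Real.rpow_natCast r 2
      rw [Real.rpow_sub hr, h2, inv_pow, div_eq_mul_inv]
    have htime : deriv (fun s => q (x, s)) t
        = r ^ (lam - 2) * deriv (fun s => q (r⁻¹ • x, s)) (-1) := by
      rw [← hrt]
      exact time_scale lam q hq hhom r hr x
    rw [hlap, hcoef, htime]
    rw [← mul_sub, hcal, mul_zero]
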